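/- arXiv:2507.02467 — 4 statements merged into one kernel-verified Lean document; each statement's English description precedes it below -/
import Mathlib

section
/- Let n ≥ 2, β > 0, and y_t = √(β/n)·(√(n−1) − √(t(n−t)) + √((t−1)(n−t+1))) for t = 1,…,n. For each t = 1,…,n−1, the partial sums satisfy y_1 + ⋯ + y_t = t·√(β(n−1)/n) − √(β·t(n−t)/n), and consequently (n·t/(n−t))·(ȳ_{0,n} − ȳ_{0,t})² = β, where ȳ_{0,u} = (1/u)·Σ_{j=1}^u y_j. -/
/-- Mean of the segment (u,v]. -/
noncomputable def segMean (y : ℕ → ℝ) (u v : ℕ) : ℝ :=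
  (∑ j ∈ Finset.Ioc u v, y j) / ((v : ℝ) - u)

lemma key_sum (n : ℕ) (β : ℝ) (y : ℕ → ℝ)
    (hy : ∀ t : ℕ, y t = Real.sqrt (β / n) *
      (Real.sqrt ((n : ℝ) - 1) - Real.sqrt ((t : ℝ) * ((n : ℝ) - t))
        + Real.sqrt (((t : ℝ) - 1) * ((n : ℝ) - t + 1)))) :
    ∀ t : ℕ, 1 ≤ t → t ≤ n →
      ∑ j ∈ Finset.Icc 1 t, y j
        = Real.sqrt (β / n) * ((t : ℝ) * Real.sqrt ((n : ℝ) - 1)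
            - Real.sqrt ((t : ℝ) * ((n : ℝ) - t))) := by
  intro t
  induction t with
  | zero => intro h; omega
  | succ k ih =>
    intro _ hk
    rcases Nat.eq_zero_or_pos k with hk0 | hk1
    · subst hk0
      simp only [Finset.Icc_self, Finset.sum_singleton]
      rw [hy 1]
      push_cast
      norm_num
    · rw [Finset.sum_Icc_succ_top (by omega : 1 ≤ k + 1), ih hk1 (by omega), hy (k + 1)]
      have h1 : ((k + 1 : ℕ) : ℝ) - 1 = (k : ℝ) := by push_cast; ring
      have h2 : ((n : ℝ) - ((k + 1 : ℕ) : ℝ) + 1) = (n : ℝ) - k := by push_cast; ring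
      rw [h1, h2]
      push_cast
      ring

theorem stmt_5 (n : ℕ) (hn : 2 ≤ n) (β : ℝ) (hβ : 0 < β) (y : ℕ → ℝ)
    (hy : ∀ t : ℕ, y t = Real.sqrt (β / n) *
      (Real.sqrt ((n : ℝ) - 1) - Real.sqrt ((t : ℝ) * ((n : ℝ) - t))
        + Real.sqrt (((t : ℝ) - 1) * ((n : ℝ) - t + 1)))) :
    ∀ t : ℕ, 1 ≤ t → t ≤ n - 1 →
      (∑ j ∈ Finset.Icc 1 t, y j
          = (t : ℝ) * Real.sqrt (β * ((n : ℝ) - 1) / n)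
            - Real.sqrt (β * (t : ℝ) * ((n : ℝ) - t) / n)) ∧
      ((n : ℝ) * t / ((n : ℝ) - t)) * (segMean y 0 n - segMean y 0 t) ^ 2 = β := by
  intro t ht1 ht2
  have hn0 : (0 : ℝ) < n := by positivity
  have hc : (0 : ℝ) ≤ β / n := by positivity
  have htn : (t : ℝ) < n := by exact_mod_cast (by omega : t < n)
  have ht0 : (0 : ℝ) < t := by exact_mod_cast (by omega : 0 < t)
  have hnt : (0 : ℝ) < (n : ℝ) - t := by linarith
  have hioc : ∀ m : ℕ, Finset.Ioc 0 m = Finset.Icc 1 m := by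
    intro m; ext j; simp [Nat.lt_iff_add_one_le]
  have hsum_t := key_sum n β y hy t ht1 (by omega)
  have hsum_n := key_sum n β y hy n (by omega) le_rfl
  have hmul : ∀ x : ℝ, 0 ≤ x → Real.sqrt (β / n) * Real.sqrt x
      = Real.sqrt (β * x / n) := by
    intro x hx
    rw [← Real.sqrt_mul hc]
    congr 1; ring
  have hpart1 : ∑ j ∈ Finset.Icc 1 t, y j
      = (t : ℝ) * Real.sqrt (β * ((n : ℝ) - 1) / n)
        - Real.sqrt (β * (t : ℝ) * ((n : ℝ) - t) / n) := by
    rw [hsum_t, mul_sub, mul_comm ((t:ℝ)) (Real.sqrt ((n:ℝ)-1)), ← mul_assoc,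
      hmul _ (by
        have : (1:ℝ) ≤ n := by exact_mod_cast (by omega : 1 ≤ n)
        linarith : (0:ℝ) ≤ (n:ℝ)-1), hmul _ (by positivity)]
    rw [mul_comm (Real.sqrt (β * ((n:ℝ)-1)/n)) ((t:ℝ))]
    congr 2
    ring
  refine ⟨hpart1, ?_⟩
  have hsn : segMean y 0 n = Real.sqrt (β / n) * Real.sqrt ((n : ℝ) - 1) := by
    rw [segMean, hioc, hsum_n]
    rw [show (n : ℝ) * ((n : ℝ) - n) = 0 by ring, Real.sqrt_zero]
    field_simp
    ring_nf
    field_simp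
  have hst : segMean y 0 t = Real.sqrt (β / n) * Real.sqrt ((n : ℝ) - 1)
      - Real.sqrt (β / n) * Real.sqrt ((t : ℝ) * ((n : ℝ) - t)) / t := by
    rw [segMean, hioc, hsum_t]
    field_simp
    ring_nf
    field_simp
    ring
  rw [hsn, hst]
  have hsq : (Real.sqrt (β / n)) ^ 2 = β / n := Real.sq_sqrt hc
  have hsq2 : (Real.sqrt ((t : ℝ) * ((n : ℝ) - t))) ^ 2 = (t : ℝ) * ((n : ℝ) - t) :=
    Real.sq_sqrt (by positivity)
  set s := Real.sqrt (β / n) with hs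
  set u := Real.sqrt ((t : ℝ) * ((n : ℝ) - t)) with hu
  rw [show s * Real.sqrt ((n:ℝ)-1) - (s * Real.sqrt ((n:ℝ)-1) - s * u / t)
      = s * u / t by ring]
  rw [div_pow, mul_pow, hsq, hsq2]
  field_simp
end

section
/- Let A : ℝ → ℝ be strictly convex differentiable with D* its conjugate ((D*)' = (A')⁻¹), and let S₁, ΔS, Q₁, ΔQ be real constants with ΔS ≠ 0. Consider 𝔻(x) = −D*(S₁ + x·ΔS) − (Q₁ + x·ΔQ). Then 𝔻 is concave, its unique critical point is x* = (1/ΔS)·(A'(−ΔQ/ΔS) − S₁), and 𝔻(x*) = A(−ΔQ/ΔS) + (ΔQ/ΔS)·S₁ − Q₁. -/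
theorem stmt_13 (A A' Ainv : ℝ → ℝ) (Ω : Set ℝ)
    (hconv : StrictConvexOn ℝ Set.univ A)
    (hderiv : ∀ x : ℝ, HasDerivAt A (A' x) x)
    (hcont : Continuous A')
    (hopen : IsOpen Ω)
    (hrange : Set.range A' = Ω)
    (hinv_left : ∀ θ : ℝ, Ainv (A' θ) = θ)
    (hinv_right : ∀ x ∈ Ω, A' (Ainv x) = x)
    (S₁ ΔS Q₁ ΔQ : ℝ) (hΔS : ΔS ≠ 0)
    (Dstar 𝔻 : ℝ → ℝ)
    (hDstar : ∀ x : ℝ, Dstar x = x * Ainv x - A (Ainv x))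
    (h𝔻 : ∀ x : ℝ, 𝔻 x = -Dstar (S₁ + x * ΔS) - (Q₁ + x * ΔQ))
    (xstar : ℝ) (hxstar : xstar = (1 / ΔS) * (A' (-ΔQ / ΔS) - S₁))
    (hdom : S₁ + xstar * ΔS ∈ Ω) :
    ConcaveOn ℝ {x : ℝ | S₁ + x * ΔS ∈ Ω} 𝔻 ∧
    HasDerivAt 𝔻 0 xstar ∧
    (∀ x : ℝ, S₁ + x * ΔS ∈ Ω → HasDerivAt 𝔻 0 x → x = xstar) ∧
    𝔻 xstar = A (-ΔQ / ΔS) + (ΔQ / ΔS) * S₁ - Q₁ := by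
  have hA'mono : StrictMono A' := by
    intro a b hab
    have h1 := hconv.lt_slope_of_hasDerivAt (Set.mem_univ a) (Set.mem_univ b) hab (hderiv a)
    have h2 := hconv.slope_lt_of_hasDerivAt (Set.mem_univ a) (Set.mem_univ b) hab (hderiv b)
    linarith
  -- gradient inequality for convex functions
  have hgrad : ∀ t1 t : ℝ, A t1 + A' t1 * (t - t1) ≤ A t := by
    intro t1 t
    rcases lt_trichotomy t1 t with h | h | h
    · have h1 := hconv.convexOn.le_slope_of_hasDerivAt (Set.mem_univ t1) (Set.mem_univ t) h
        (hderiv t1)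
      rw [slope_def_field] at h1
      have h2 := (le_div_iff₀ (by linarith : (0:ℝ) < t - t1)).mp h1
      linarith
    · simp [h]
    · have h1 := hconv.convexOn.slope_le_of_hasDerivAt (Set.mem_univ t) (Set.mem_univ t1) h
        (hderiv t1)
      rw [slope_def_field] at h1
      have h2 := (div_le_iff₀ (by linarith : (0:ℝ) < t1 - t)).mp h1
      nlinarith
  -- Fenchel-Young type inequality
  have hkey : ∀ x ∈ Ω, ∀ θ : ℝ, x * θ - A θ ≤ Dstar x := by
    intro x hx θ
    rw [hDstar]
    have h1 := hgrad (Ainv x) θ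
    rw [hinv_right x hx] at h1
    nlinarith
  have hsub : ∀ x ∈ Ω, ∀ y ∈ Ω, (y - x) * Ainv x ≤ Dstar y - Dstar x := by
    intro x hx y hy
    have h1 := hkey y hy (Ainv x)
    rw [hDstar x]
    nlinarith
  -- continuity of the inverse on Ω
  have hAinv_cont : ∀ s ∈ Ω, ContinuousAt Ainv s := by
    intro s hs
    rw [Metric.continuousAt_iff]
    intro ε hε
    have hsA : A' (Ainv s) = s := hinv_right s hs
    have h1 : A' (Ainv s - ε) < s := by
      nth_rewrite 2 [← hsA]; exact hA'mono (by linarith)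
    have h2 : s < A' (Ainv s + ε) := by
      nth_rewrite 1 [← hsA]; exact hA'mono (by linarith)
    have hU : IsOpen (Ω ∩ Set.Ioo (A' (Ainv s - ε)) (A' (Ainv s + ε))) := hopen.inter isOpen_Ioo
    obtain ⟨δ, hδ, hball⟩ := Metric.isOpen_iff.mp hU s ⟨hs, h1, h2⟩
    refine ⟨δ, hδ, fun {y} hy => ?_⟩
    obtain ⟨hyΩ, hy1, hy2⟩ := hball (Metric.mem_ball.mpr hy)
    rw [← hinv_right y hyΩ] at hy1 hy2
    have hl : Ainv s - ε < Ainv y := hA'mono.lt_iff_lt.mp hy1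
    have hr : Ainv y < Ainv s + ε := hA'mono.lt_iff_lt.mp hy2
    rw [Real.dist_eq, abs_lt]
    constructor <;> linarith
  -- derivative of Dstar on Ω
  have hDderiv : ∀ s ∈ Ω, HasDerivAt Dstar (Ainv s) s := by
    intro s hs
    rw [hasDerivAt_iff_tendsto_slope, tendsto_iff_dist_tendsto_zero]
    have hΩev : ∀ᶠ y in nhdsWithin s {s}ᶜ, y ∈ Ω :=
      eventually_nhdsWithin_of_eventually_nhds (hopen.eventually_mem hs)
    have hbound : ∀ᶠ y in nhdsWithin s {s}ᶜ,
        dist (slope Dstar s y) (Ainv s) ≤ dist (Ainv y) (Ainv s) := by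
      filter_upwards [hΩev, self_mem_nhdsWithin] with y hyΩ hyne
      have hne : y ≠ s := hyne
      have hl := hsub s hs y hyΩ
      have hr := hsub y hyΩ s hs
      rw [slope_def_field, Real.dist_eq, Real.dist_eq]
      rcases lt_or_gt_of_ne hne with h | h
      · have hd : (0:ℝ) < s - y := by linarith
        rw [abs_le]
        constructor
        · have : Ainv y - Ainv s ≤ (Dstar y - Dstar s) / (y - s) - Ainv s := by
            rw [le_sub_iff_add_le, le_div_iff_of_neg (by linarith : y - s < 0)]
            nlinarith
          have h2 : -(|Ainv y - Ainv s|) ≤ Ainv y - Ainv s := neg_abs_le _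
          linarith
        · have : (Dstar y - Dstar s) / (y - s) - Ainv s ≤ 0 := by
            rw [sub_nonpos, div_le_iff_of_neg (by linarith : y - s < 0)]
            nlinarith
          have h2 : (0:ℝ) ≤ |Ainv y - Ainv s| := abs_nonneg _
          linarith
      · have hd : (0:ℝ) < y - s := by linarith
        rw [abs_le]
        constructor
        · have : (0:ℝ) ≤ (Dstar y - Dstar s) / (y - s) - Ainv s := by
            rw [sub_nonneg, le_div_iff₀ hd]
            nlinarith
          have h2 : (0:ℝ) ≤ |Ainv y - Ainv s| := abs_nonneg _
          linarith
        · have : (Dstar y - Dstar s) / (y - s) - Ainv s ≤ Ainv y - Ainv s := by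
            rw [sub_le_sub_iff_right, div_le_iff₀ hd]
            nlinarith
          have h2 : Ainv y - Ainv s ≤ |Ainv y - Ainv s| := le_abs_self _
          linarith
    have hAt : Filter.Tendsto (fun y => dist (Ainv y) (Ainv s)) (nhdsWithin s {s}ᶜ) (nhds 0) :=
      tendsto_iff_dist_tendsto_zero.mp ((hAinv_cont s hs).tendsto.mono_left nhdsWithin_le_nhds)
    exact squeeze_zero' (.of_forall fun y => dist_nonneg) hbound hAt
  have h𝔻fun : 𝔻 = fun x => -Dstar (S₁ + x * ΔS) - (Q₁ + x * ΔQ) := funext h𝔻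
  have h𝔻deriv : ∀ x : ℝ, S₁ + x * ΔS ∈ Ω →
      HasDerivAt 𝔻 (-(Ainv (S₁ + x * ΔS) * ΔS) - ΔQ) x := by
    intro x hx
    rw [h𝔻fun]
    have h1 : HasDerivAt (fun x : ℝ => S₁ + x * ΔS) ΔS x := by
      simpa using ((hasDerivAt_id x).mul_const ΔS).const_add S₁
    have h2 := (hDderiv _ hx).comp x h1
    have h3 : HasDerivAt (fun x : ℝ => Q₁ + x * ΔQ) ΔQ x := by
      simpa using ((hasDerivAt_id x).mul_const ΔQ).const_add Q₁
    have h4 := h2.neg.sub h3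
    exact h4
  have hsstar : S₁ + xstar * ΔS = A' (-ΔQ / ΔS) := by
    rw [hxstar]; field_simp; ring
  have hAinvstar : Ainv (S₁ + xstar * ΔS) = -ΔQ / ΔS := by rw [hsstar, hinv_left]
  have hd0 : HasDerivAt 𝔻 0 xstar := by
    have h1 := h𝔻deriv xstar hdom
    rw [hAinvstar] at h1
    have hz : -(-ΔQ / ΔS * ΔS) - ΔQ = 0 := by field_simp; ring
    rwa [hz] at h1
  refine ⟨?_, hd0, ?_, ?_⟩
  · -- concavity
    have hΩconv : Convex ℝ Ω := by
      rw [← hrange, ← Set.image_univ]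
      exact ((isPreconnected_univ.image A' hcont.continuousOn).ordConnected).convex
    constructor
    · intro x hx y hy a b ha hb hab
      have hx' : S₁ + x * ΔS ∈ Ω := hx
      have hy' : S₁ + y * ΔS ∈ Ω := hy
      have hmem := hΩconv hx' hy' ha hb hab
      have heq : a • (S₁ + x * ΔS) + b • (S₁ + y * ΔS) = S₁ + (a • x + b • y) * ΔS := by
        simp only [smul_eq_mul]; linear_combination S₁ * hab
      show S₁ + (a • x + b • y) * ΔS ∈ Ω
      rwa [heq] at hmem
    · intro x hx y hy a b ha hb hab
      have hx' : S₁ + x * ΔS ∈ Ω := hx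
      have hy' : S₁ + y * ΔS ∈ Ω := hy
      simp only [smul_eq_mul]
      have hzmem : S₁ + (a * x + b * y) * ΔS ∈ Ω := by
        have hmem := hΩconv hx' hy' ha hb hab
        simp only [smul_eq_mul] at hmem
        have heq : a * (S₁ + x * ΔS) + b * (S₁ + y * ΔS) = S₁ + (a * x + b * y) * ΔS := by
          linear_combination S₁ * hab
        rwa [heq] at hmem
      set θ := Ainv (S₁ + (a * x + b * y) * ΔS) with hθ
      have hkx := hkey _ hx' θ
      have hky := hkey _ hy' θ
      have hDz := hDstar (S₁ + (a * x + b * y) * ΔS)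
      rw [← hθ] at hDz
      rw [h𝔻 x, h𝔻 y, h𝔻 (a * x + b * y)]
      have h1 := mul_le_mul_of_nonneg_left hkx ha
      have h2 := mul_le_mul_of_nonneg_left hky hb
      have e2 : a * A θ + b * A θ = A θ := by linear_combination A θ * hab
      have e3 : a * Q₁ + b * Q₁ = Q₁ := by linear_combination Q₁ * hab
      have e4 : a * (S₁ * θ) + b * (S₁ * θ) = S₁ * θ := by linear_combination (S₁ * θ) * hab
      nlinarith [h1, h2, hDz, e2, e3, e4]
  · -- uniqueness
    intro x hx hdx
    have h1 := h𝔻deriv x hx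
    have h2 : -(Ainv (S₁ + x * ΔS) * ΔS) - ΔQ = 0 := h1.unique hdx
    have hAv : Ainv (S₁ + x * ΔS) = -ΔQ / ΔS := by
      rw [eq_div_iff hΔS]; linarith
    have h3 := congrArg A' hAv
    rw [hinv_right _ hx] at h3
    have h4 : S₁ + x * ΔS = S₁ + xstar * ΔS := by rw [h3, hsstar]
    have h5 : x * ΔS = xstar * ΔS := by linarith
    exact mul_right_cancel₀ hΔS h5
  · -- value
    rw [h𝔻, hsstar, hDstar, hinv_left, hxstar]
    field_simp
    ring
end

section
/- (One-constraint Gaussian dual maximum) Let d ≥ 1, vectors S̄_st, S̄_rs ∈ ℝ^d, reals Q_r, Q_s, β, and positive integers r < s < t. Define Δ = S̄_st − S̄_rs, Q̄ = (Q_s − Q_r)/(s−r), R = √(‖S̄_rs‖² + 2Q̄) (assume ‖S̄_rs‖² + 2Q̄ ≥ 0), and the Gaussian dual D(μ) = (t−s)·(−(1−μ)·‖(S̄_st − μS̄_rs)/(1−μ)‖²/2 + μ·Q̄) + Q_s + β for μ ∈ [0,1). Then max_{μ∈[0,1)} D(μ) = −((t−s)/2)‖S̄_st‖² + Q_s + β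 if ‖Δ‖ ≥ R, and equals −((t−s)/2)‖S̄_st‖² + Q_s + β + ((t−s)/2)(‖Δ‖ − R)² if ‖Δ‖ < R. -/
set_option maxHeartbeats 1000000


theorem stmt_16 (d : ℕ) (hd : 1 ≤ d) (r s t : ℕ) (hr : 0 < r) (hrs : r < s) (hst : s < t)
    (Sst Srs : EuclideanSpace ℝ (Fin d)) (Qr Qs β : ℝ)
    (Qbar : ℝ) (hQbar : Qbar = (Qs - Qr) / ((s : ℝ) - r))
    (hpos : 0 ≤ ‖Srs‖ ^ 2 + 2 * Qbar)
    (R : ℝ) (hR : R = Real.sqrt (‖Srs‖ ^ 2 + 2 * Qbar))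
    (D : ℝ → ℝ)
    (hD : ∀ μ : ℝ, D μ = ((t : ℝ) - s) *
      (-(1 - μ) * ‖(1 - μ)⁻¹ • (Sst - μ • Srs)‖ ^ 2 / 2 + μ * Qbar) + Qs + β) :
    (R ≤ ‖Sst - Srs‖ →
      sSup (D '' Set.Ico (0 : ℝ) 1) = -(((t : ℝ) - s) / 2) * ‖Sst‖ ^ 2 + Qs + β) ∧
    (‖Sst - Srs‖ < R →
      sSup (D '' Set.Ico (0 : ℝ) 1)
        = -(((t : ℝ) - s) / 2) * ‖Sst‖ ^ 2 + Qs + β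
          + (((t : ℝ) - s) / 2) * (‖Sst - Srs‖ - R) ^ 2) := by
  have hK : (0:ℝ) < (t : ℝ) - s := by
    have : (s:ℝ) < t := by exact_mod_cast hst
    linarith
  set K : ℝ := (t : ℝ) - s with hKdef
  set a : ℝ := ‖Sst - Srs‖ with hadef
  have ha0 : 0 ≤ a := norm_nonneg _
  set ρ : ℝ := ‖Srs‖ ^ 2 + 2 * Qbar with hρdef
  have hρ0 : 0 ≤ ρ := hpos
  have hR0 : 0 ≤ R := by rw [hR]; exact Real.sqrt_nonneg _
  have hR2 : R ^ 2 = ρ := by rw [hR]; exact Real.sq_sqrt hpos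
  set ip : ℝ := inner ℝ (Sst - Srs) Srs with hipdef
  clear_value K a ρ ip
  have hSst : ‖Sst‖ ^ 2 = a ^ 2 + 2 * ip + ‖Srs‖ ^ 2 := by
    have h1 : Sst = (Sst - Srs) + Srs := by abel
    rw [hadef, hipdef]
    nth_rewrite 1 [h1]
    exact norm_add_sq_real _ _
  -- rewrite D through the substitution u = 1 - μ
  have hDform : ∀ μ : ℝ, μ < 1 →
      D μ = K * (-(a ^ 2 / (2 * (1 - μ)) + (1 - μ) * ρ / 2) - ip + Qbar) + Qs + β := by
    intro μ hμ
    have hu : (0:ℝ) < 1 - μ := by linarith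
    have hvec : Sst - μ • Srs = (Sst - Srs) + (1 - μ) • Srs := by module
    rw [hD, hvec, norm_smul, mul_pow, norm_add_sq_real, real_inner_smul_right, norm_smul,
      Real.norm_eq_abs, Real.norm_eq_abs, abs_of_pos (inv_pos.mpr hu), abs_of_pos hu]
    rw [← hadef, ← hipdef, hρdef]
    field_simp
    ring
  have hne : (D '' Set.Ico (0:ℝ) 1).Nonempty :=
    ⟨D 0, ⟨0, ⟨le_refl _, one_pos⟩, rfl⟩⟩
  -- the universal AM-GM bound
  have hbound : ∀ μ ∈ Set.Ico (0:ℝ) 1,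
      D μ ≤ K * (-(a * R) - ip + Qbar) + Qs + β := by
    rintro μ ⟨h0, h1⟩
    rw [hDform μ h1]
    have hu : (0:ℝ) < 1 - μ := by linarith
    have key : a * R ≤ a ^ 2 / (2 * (1 - μ)) + (1 - μ) * ρ / 2 := by
      rw [← sub_nonneg]
      have heq : a ^ 2 / (2 * (1 - μ)) + (1 - μ) * ρ / 2 - a * R
          = (a - (1 - μ) * R) ^ 2 / (2 * (1 - μ)) := by
        rw [← hR2]; field_simp; ring
      rw [heq]
      positivity
    have hmono : -(a ^ 2 / (2 * (1 - μ)) + (1 - μ) * ρ / 2) - ip + Qbar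
        ≤ -(a * R) - ip + Qbar := by linarith
    have := mul_le_mul_of_nonneg_left hmono hK.le
    linarith
  have hbound' : ∀ x ∈ D '' Set.Ico (0:ℝ) 1,
      x ≤ K * (-(a * R) - ip + Qbar) + Qs + β := by
    rintro x ⟨μ, hμ, rfl⟩; exact hbound μ hμ
  have hbdd : BddAbove (D '' Set.Ico (0:ℝ) 1) := ⟨_, hbound'⟩
  constructor
  · -- case R ≤ a : max at μ = 0
    intro hcase
    have hmem : D 0 ∈ D '' Set.Ico (0:ℝ) 1 := ⟨0, ⟨le_refl _, one_pos⟩, rfl⟩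
    have hub : ∀ x ∈ D '' Set.Ico (0:ℝ) 1, x ≤ D 0 := by
      rintro x ⟨μ, ⟨h0, h1⟩, rfl⟩
      rw [hDform μ h1, hDform 0 one_pos]
      have hu : (0:ℝ) < 1 - μ := by linarith
      have hρa : ρ ≤ a ^ 2 := by
        rw [← hR2]; nlinarith
    -- a^2/2 + ρ/2 ≤ a^2/(2u) + u ρ/2
      have key : a ^ 2 / (2 * (1 - 0)) + (1 - 0) * ρ / 2
          ≤ a ^ 2 / (2 * (1 - μ)) + (1 - μ) * ρ / 2 := by
        rw [← sub_nonneg]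
        have heq : a ^ 2 / (2 * (1 - μ)) + (1 - μ) * ρ / 2
            - (a ^ 2 / (2 * (1 - 0)) + (1 - 0) * ρ / 2)
            = μ * (a ^ 2 - (1 - μ) * ρ) / (2 * (1 - μ)) := by
          field_simp; ring
        rw [heq]
        have h2 : 0 ≤ a ^ 2 - (1 - μ) * ρ := by nlinarith
        have : 0 ≤ μ * (a ^ 2 - (1 - μ) * ρ) := mul_nonneg h0 h2
        positivity
      have hmono : -(a ^ 2 / (2 * (1 - μ)) + (1 - μ) * ρ / 2) - ip + Qbar
          ≤ -(a ^ 2 / (2 * (1 - 0)) + (1 - 0) * ρ / 2) - ip + Qbar := by linarith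
      have := mul_le_mul_of_nonneg_left hmono hK.le
      linarith
    have hsup : sSup (D '' Set.Ico (0:ℝ) 1) = D 0 :=
      le_antisymm (csSup_le hne hub) (le_csSup ⟨D 0, hub⟩ hmem)
    rw [hsup, hDform 0 one_pos]
    rw [hSst, hρdef]
    ring
  · -- case a < R
    intro hcase
    have hRpos : 0 < R := lt_of_le_of_lt ha0 hcase
    set V : ℝ := K * (-(a * R) - ip + Qbar) + Qs + β with hVdef
    have hle : sSup (D '' Set.Ico (0:ℝ) 1) ≤ V := csSup_le hne hbound'
    have hge : V ≤ sSup (D '' Set.Ico (0:ℝ) 1) := by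
      rcases eq_or_lt_of_le ha0 with hA | hA
      · -- a = 0 : supremum attained in the limit μ → 1
        apply le_of_forall_pos_le_add
        intro ε hε
        have hρpos : 0 < ρ := by rw [← hR2]; positivity
        obtain ⟨u, hu0, hu1, h3⟩ : ∃ u : ℝ, 0 < u ∧ u ≤ 1 ∧ u * (K * ρ) ≤ 2 * ε := by
          refine ⟨min 1 (2 * ε / (K * ρ)), lt_min one_pos (by positivity), min_le_left _ _, ?_⟩
          rw [← le_div_iff₀ (by positivity)]
          exact min_le_right _ _
        have hmem : D (1 - u) ∈ D '' Set.Ico (0:ℝ) 1 :=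
          ⟨1 - u, ⟨by linarith, by linarith⟩, rfl⟩
        have hDval : D (1 - u) = K * (-(u * ρ / 2) - ip + Qbar) + Qs + β := by
          rw [hDform (1 - u) (by linarith)]
          rw [← hA]
          ring_nf
        have huε : K * (u * ρ / 2) ≤ ε := by
          calc K * (u * ρ / 2) = u * (K * ρ) / 2 := by ring
            _ ≤ 2 * ε / 2 := by linarith
            _ = ε := by ring
        have : V - ε ≤ D (1 - u) := by
          rw [hDval, hVdef, ← hA]
          nlinarith
        have h2 := le_csSup hbdd hmem
        linarith
      · -- a > 0 : supremum attained at μ = 1 - a/R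
        have hmem : D (1 - a / R) ∈ D '' Set.Ico (0:ℝ) 1 := by
          refine ⟨1 - a / R, ⟨?_, ?_⟩, rfl⟩
          · have : a / R ≤ 1 := (div_le_one hRpos).mpr hcase.le
            linarith
          · have : 0 < a / R := by positivity
            linarith
        have hDval : D (1 - a / R) = V := by
          rw [hDform (1 - a / R) (by nlinarith [div_pos hA hRpos]), hVdef]
          have h1 : (1 : ℝ) - (1 - a / R) = a / R := by ring
          rw [h1]
          have : a ^ 2 / (2 * (a / R)) + a / R * ρ / 2 = a * R := by
            rw [← hR2]; field_simp; ring
          rw [this]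
        rw [← hDval]
        exact le_csSup hbdd hmem
    have hsup : sSup (D '' Set.Ico (0:ℝ) 1) = V := le_antisymm hle hge
    rw [hsup, hVdef]
    have : ρ = ‖Srs‖ ^ 2 + 2 * Qbar := hρdef
    nlinarith [hSst, hR2]
end

section
/- (No-pruning condition in Gaussian no-change case) Let r < s < t be positive integers and S̄_{0r}, S̄_{rs}, S̄_{st}, S̄_{0s}, S̄_{0t} ∈ ℝ^d the corresponding segment means of a fixed sequence (so that r·S̄_{0r} + (s−r)·S̄_{rs} = s·S̄_{0s}, etc.). With Q_u = −(u/2)·‖S̄_{0u}‖² for u ∈ {r,s,t}, the maximum of the single-constraint Gaussian dual exceeds Q_t + β (i.e., index s is pruned by r at time t) if and only if √(r/s)·‖S̄_{rs} − S̄_{0r}‖ − ‖S̄_{st} − S̄_{rs}‖ > √(s/t)·‖S̄_{st} − S̄_{0s}‖, provided ‖S̄_{st} − S̄_{rs}‖ < √(r/s)·‖S̄_{rs} − S̄_{0r}‖. -/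
lemma stmt_19_key {d : ℕ} (w1 w2 w : ℝ) (hsum : w1 + w2 = w)
    (x y m : EuclideanSpace ℝ (Fin d)) (h : w1 • x + w2 • y = w • m) :
    w ^ 2 * ‖m‖ ^ 2 = w * w1 * ‖x‖ ^ 2 + w * w2 * ‖y‖ ^ 2 - w1 * w2 * ‖y - x‖ ^ 2 := by
  subst hsum
  have h2 : (inner ℝ (w1 • x + w2 • y) (w1 • x + w2 • y) : ℝ)
      = (inner ℝ ((w1 + w2) • m) ((w1 + w2) • m) : ℝ) := by rw [h]
  simp only [inner_add_left, inner_add_right, real_inner_smul_left, real_inner_smul_right,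
    real_inner_self_eq_norm_sq, norm_smul, Real.norm_eq_abs, mul_pow, sq_abs] at h2
  have hxy : (inner ℝ x y : ℝ) = (inner ℝ y x : ℝ) := (real_inner_comm y x)
  have h3 : ‖y - x‖ ^ 2 = ‖y‖ ^ 2 - 2 * (inner ℝ y x : ℝ) + ‖x‖ ^ 2 := norm_sub_sq_real y x
  linear_combination (-1 : ℝ) * h2 + w1 * w2 * h3 + w1 * w2 * hxy

set_option maxHeartbeats 1000000 in
theorem stmt_19 (d : ℕ) (r s t : ℕ) (hr : 0 < r) (hrs : r < s) (hst : s < t)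
    (S0r Srs Sst S0s S0t : EuclideanSpace ℝ (Fin d))
    (hcons1 : (r : ℝ) • S0r + ((s : ℝ) - r) • Srs = (s : ℝ) • S0s)
    (hcons2 : (s : ℝ) • S0s + ((t : ℝ) - s) • Sst = (t : ℝ) • S0t)
    (β : ℝ) (Qr Qs Qt : ℝ)
    (hQr : Qr = -((r : ℝ) / 2) * ‖S0r‖ ^ 2)
    (hQs : Qs = -((s : ℝ) / 2) * ‖S0s‖ ^ 2)
    (hQt : Qt = -((t : ℝ) / 2) * ‖S0t‖ ^ 2)
    (R : ℝ) (hR : R = Real.sqrt (‖Srs‖ ^ 2 + 2 * ((Qs - Qr) / ((s : ℝ) - r))))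
    (hlt : ‖Sst - Srs‖ < Real.sqrt ((r : ℝ) / s) * ‖Srs - S0r‖) :
    (-(((t : ℝ) - s) / 2) * ‖Sst‖ ^ 2 + Qs + β
        + (((t : ℝ) - s) / 2) * (‖Sst - Srs‖ - R) ^ 2 > Qt + β)
      ↔ Real.sqrt ((r : ℝ) / s) * ‖Srs - S0r‖ - ‖Sst - Srs‖
          > Real.sqrt ((s : ℝ) / t) * ‖Sst - S0s‖ := by
  have hr' : (0:ℝ) < r := by exact_mod_cast hr
  have hs'' : (r:ℝ) < s := by exact_mod_cast hrs
  have ht'' : (s:ℝ) < t := by exact_mod_cast hst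
  have hs' : (0:ℝ) < s := lt_trans hr' hs''
  have ht' : (0:ℝ) < t := lt_trans hs' ht''
  have hs0 : (s:ℝ) ≠ 0 := ne_of_gt hs'
  have ht0 : (t:ℝ) ≠ 0 := ne_of_gt ht'
  have hsr0 : (s:ℝ) - r ≠ 0 := by linarith
  have hts0 : (t:ℝ) - s ≠ 0 := by linarith
  have hid1 := stmt_19_key (r:ℝ) ((s:ℝ) - r) (s:ℝ) (by ring) S0r Srs S0s hcons1
  have hid2 := stmt_19_key (s:ℝ) ((t:ℝ) - s) (t:ℝ) (by ring) S0s Sst S0t hcons2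
  set a := ‖Sst - Srs‖ with ha
  set A := ‖Srs - S0r‖ with hA
  set B := ‖Sst - S0s‖ with hB
  have e1 : 2 * (s:ℝ) * (Qs - Qr)
      = -((s:ℝ) * ((s:ℝ) - r)) * ‖Srs‖ ^ 2 + ((r:ℝ) * ((s:ℝ) - r)) * A ^ 2 := by
    rw [hQr, hQs]; linear_combination (-1 : ℝ) * hid1
  have e2 : 2 * (t:ℝ) * (Qt - Qs)
      = -((t:ℝ) * ((t:ℝ) - s)) * ‖Sst‖ ^ 2 + ((s:ℝ) * ((t:ℝ) - s)) * B ^ 2 := by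
    rw [hQs, hQt]; linear_combination (-1 : ℝ) * hid2
  have hrad : ‖Srs‖ ^ 2 + 2 * ((Qs - Qr) / ((s : ℝ) - r)) = ((r:ℝ)/s) * A ^ 2 := by
    field_simp
    linear_combination e1
  set sr := Real.sqrt ((r:ℝ)/s) with hsrdef
  set stq := Real.sqrt ((s:ℝ)/t) with hstdef
  have hRval : R = sr * A := by
    rw [hR, hrad, hsrdef, Real.sqrt_mul (by positivity), Real.sqrt_sq (norm_nonneg _)]
  have hst2 : stq ^ 2 = (s:ℝ)/t := Real.sq_sqrt (by positivity)
  have hstnn : 0 ≤ stq := Real.sqrt_nonneg _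
  have ha0 : 0 ≤ a := norm_nonneg _
  have hB0 : 0 ≤ B := norm_nonneg _
  have hgap : Qt + β - (-(((t : ℝ) - s) / 2) * ‖Sst‖ ^ 2 + Qs + β)
      = (((t:ℝ) - s) / 2) * ((stq * B) ^ 2) := by
    have hsb : (stq * B) ^ 2 = ((s:ℝ)/t) * B ^ 2 := by rw [mul_pow, hst2]
    rw [hsb]
    field_simp
    linear_combination e2
  rw [hRval]
  have hts : (0:ℝ) < ((t:ℝ) - s) / 2 := by linarith
  have hu : (0:ℝ) < sr * A - a := sub_pos.mpr hlt
  have hsq : (a - sr * A) ^ 2 = (sr * A - a) ^ 2 := by ring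
  have hiff : (stq * B) ^ 2 < (sr * A - a) ^ 2 ↔ stq * B < sr * A - a :=
    pow_lt_pow_iff_left₀ (mul_nonneg hstnn hB0) hu.le two_ne_zero
  constructor
  · intro h
    have h1 : (((t:ℝ) - s) / 2) * ((stq * B) ^ 2)
        < (((t:ℝ) - s) / 2) * ((a - sr * A) ^ 2) := by linarith
    have h2 : (stq * B) ^ 2 < (sr * A - a) ^ 2 := by
      rw [← hsq]; exact lt_of_mul_lt_mul_left h1 hts.le
    linarith [hiff.mp h2]
  · intro h
    have h2 : (stq * B) ^ 2 < (a - sr * A) ^ 2 := by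
      rw [hsq]; exact hiff.mpr (by linarith)
    have h1 := mul_lt_mul_of_pos_left h2 hts
    linarith
end
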